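/- For all integers d ≥ 1 and all integers k, the Eulerian numbers satisfy the two-scale equation A_{d,k} = Σ_{j=0}^{d+1} 2^{-d} · C(d+1,j) · A_{d,2k-j}, where A_{d,m} := d!·B_{d+1}(m) (which is the usual Eulerian number for 1 ≤ m ≤ d and zero otherwise). -/

import Mathlib

open MeasureTheory

/-- B-splines: `B 1` is the indicator of `[0,1)`, and `B d x = ∫_0^1 B (d-1) (x - t) dt`. -/
noncomputable def B : ℕ → ℝ → ℝ
  | 0, _ => 0
  | 1, x => if 0 ≤ x ∧ x < 1 then 1 else 0
  | d + 2, x => ∫ t in (0:ℝ)..(1:ℝ), B (d + 1) (x - t)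

open Polynomial
lemma coeff_one_sub_X_pow (n k : ℕ) :
    ((1 - X : ℝ[X]) ^ n).coeff k = (-1:ℝ)^k * (n.choose k : ℝ) := by
  have h : (1 - X : ℝ[X]) = (C (-1)) * (X + C (-1)) := by
    simp [mul_add]; ring
  rw [h, mul_pow, ← C_pow, coeff_C_mul, coeff_X_add_C_pow]
  rcases le_or_gt k n with hk | hk
  · have hs : (-1:ℝ)^n * (-1:ℝ)^(n-k) = (-1)^k := by
      rw [← pow_add, show n + (n-k) = 2*(n-k)+k by omega, pow_add, pow_mul]
      norm_num
    calc ((-1:ℝ))^n * ((-1:ℝ)^(n-k) * (n.choose k : ℝ))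
        = ((-1:ℝ)^n * (-1:ℝ)^(n-k)) * (n.choose k : ℝ) := by ring
      _ = _ := by rw [hs]
  · rw [Nat.choose_eq_zero_of_lt hk]
    simp

lemma coeff_one_sub_sq (n s : ℕ) :
    ((1 - X^2 : ℝ[X])^n).coeff s =
      if s % 2 = 0 ∧ s / 2 ≤ n then (-1:ℝ)^(s/2) * (n.choose (s/2) : ℝ) else 0 := by
  have h : (1 - X^2 : ℝ[X])^n
      = ∑ m ∈ Finset.range (n+1), C ((-1:ℝ)^m * (n.choose m : ℝ)) * X^(2*m) := by
    rw [sub_eq_add_neg, add_comm, add_pow]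
    refine Finset.sum_congr rfl fun m hm => ?_
    rw [one_pow, mul_one, neg_pow, ← pow_mul]
    rw [map_mul, map_pow, map_neg, map_one]
    simp [C_eq_natCast]
    ring
  rw [h, finset_sum_coeff]
  simp only [coeff_C_mul, coeff_X_pow]
  by_cases he : s % 2 = 0 ∧ s / 2 ≤ n
  · rw [if_pos he]
    rw [Finset.sum_eq_single (s/2)]
    · rw [if_pos (by omega)]; ring
    · intro m _ hm
      rw [if_neg (by omega), mul_zero]
    · intro hmem
      exact absurd (Finset.mem_range.mpr (by omega)) hmem
  · rw [if_neg he]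
    refine Finset.sum_eq_zero fun m hm => ?_
    rw [Finset.mem_range] at hm
    rw [if_neg (by omega), mul_zero]

lemma es_eq (n s : ℕ) :
    ∑ i ∈ Finset.range (s+1), (-1:ℝ)^i * (n.choose i : ℝ) * (n.choose (s-i) : ℝ) =
      ((1 - X^2 : ℝ[X])^n).coeff s := by
  have h : ((1 - X^2 : ℝ[X])^n) = (1 - X : ℝ[X])^n * (1 + X : ℝ[X])^n := by
    rw [← mul_pow]; ring_nf
  rw [h, coeff_mul, Finset.Nat.sum_antidiagonal_eq_sum_range_succ_mk]
  refine Finset.sum_congr rfl fun i hi => ?_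
  rw [coeff_one_sub_X_pow, coeff_one_add_X_pow]

lemma sum_square {M : Type*} [AddCommMonoid M] (n : ℕ) (F : ℕ → ℕ → M)
    (hF : ∀ i j, (n < i ∨ n < j) → F i j = 0) :
    ∑ j ∈ Finset.range (n+1), ∑ i ∈ Finset.range (n+1), F i j =
      ∑ s ∈ Finset.range (2*n+1), ∑ i ∈ Finset.range (s+1), F i (s-i) := by
  classical
  have hR : ∀ s : ℕ, ∑ i ∈ Finset.range (s+1), F i (s-i) =
      ∑ p ∈ Finset.HasAntidiagonal.antidiagonal s, F p.1 p.2 := fun s => by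
    simpa using
      (Finset.Nat.sum_antidiagonal_eq_sum_range_succ_mk (fun p => F p.1 p.2) s).symm
  simp only [hR]
  have hdisj : (↑(Finset.range (2*n+1)) : Set ℕ).PairwiseDisjoint Finset.HasAntidiagonal.antidiagonal := by
    intro a _ b _ hab
    simp only [Finset.disjoint_left]
    intro p hpa hpb
    rw [Finset.HasAntidiagonal.mem_antidiagonal] at hpa hpb
    exact hab (hpa ▸ hpb ▸ rfl)
  rw [← Finset.sum_biUnion hdisj]
  have hL : ∑ j ∈ Finset.range (n+1), ∑ i ∈ Finset.range (n+1), F i j =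
      ∑ p ∈ Finset.range (n+1) ×ˢ Finset.range (n+1), F p.1 p.2 := by
    rw [Finset.sum_comm]
    exact (Finset.sum_product' _ _ _).symm
  rw [hL]
  apply Finset.sum_subset
  · intro p hp
    rw [Finset.mem_product, Finset.mem_range, Finset.mem_range] at hp
    rw [Finset.mem_biUnion]
    exact ⟨p.1 + p.2, Finset.mem_range.mpr (by omega), Finset.HasAntidiagonal.mem_antidiagonal.mpr rfl⟩
  · intro p _ hp
    rw [Finset.mem_product, not_and_or] at hp
    apply hF
    rcases hp with h | h <;> rw [Finset.mem_range, not_lt] at h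
    · left; omega
    · right; omega

lemma es_eq' (n s : ℕ) :
    ∑ i ∈ Finset.range (s+1), (-1:ℝ)^i * (n.choose i : ℝ) * (n.choose (s-i) : ℝ) =
      if s % 2 = 0 ∧ s / 2 ≤ n then (-1:ℝ)^(s/2) * (n.choose (s/2) : ℝ) else 0 := by
  rw [es_eq, coeff_one_sub_sq]

noncomputable def tp (n : ℕ) (x : ℝ) : ℝ := (max x 0) ^ n

lemma tp_cont (n : ℕ) : Continuous (tp n) :=
  (continuous_pow n).comp (continuous_id.max continuous_const)

lemma tp_hasDerivAt (n : ℕ) (hn : 1 ≤ n) (u : ℝ) :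
    HasDerivAt (tp (n+1)) ((n+1) * tp n u) u := by
  rcases lt_trichotomy u 0 with h | h | h
  · have h0 : tp n u = 0 := by
      simp [tp, max_eq_right h.le, zero_pow (by omega : n ≠ 0)]
    rw [h0, mul_zero]
    refine (hasDerivAt_const u (0:ℝ)).congr_of_eventuallyEq ?_
    filter_upwards [eventually_nhds_iff.mpr ⟨Set.Iio 0, fun y hy => hy, isOpen_Iio, h⟩] with y hy
    simp [tp, max_eq_right (le_of_lt (Set.mem_Iio.mp hy)), zero_pow (by omega : n + 1 ≠ 0)]
  · subst h
    have h0 : tp n 0 = 0 := by simp [tp, zero_pow (by omega : n ≠ 0)]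
    rw [h0, mul_zero]
    rw [hasDerivAt_iff_isLittleO]
    have h00 : tp (n+1) 0 = 0 := by simp [tp, zero_pow (by omega : n + 1 ≠ 0)]
    simp only [h00, sub_zero, smul_zero, sub_zero]
    rw [Asymptotics.isLittleO_iff]
    intro c hc
    have hev : ∀ᶠ x : ℝ in nhds 0, |x| ≤ min 1 c :=
      Metric.eventually_nhds_iff.mpr ⟨min 1 c, lt_min one_pos hc,
        fun {y} hy => by simpa [Real.dist_eq] using le_of_lt hy⟩
    filter_upwards [hev] with x hx
    have hx1 : |x| ≤ 1 := le_trans hx (min_le_left _ _)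
    have hxc : |x| ≤ c := le_trans hx (min_le_right _ _)
    have h1 : ‖tp (n+1) x‖ = (max x 0)^(n+1) := by
      rw [Real.norm_eq_abs]
      exact abs_of_nonneg (pow_nonneg (le_max_right _ _) _)
    rw [h1]
    have h2 : (max x 0)^(n+1) ≤ |x|^(n+1) := by
      apply pow_le_pow_left₀ (le_max_right _ _)
      rw [max_le_iff]; exact ⟨le_abs_self x, abs_nonneg x⟩
    have h3 : |x|^(n+1) ≤ |x|^2 :=
      pow_le_pow_of_le_one (abs_nonneg x) hx1 (by omega)
    have h4 : |x|^2 ≤ c * |x| := by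
      rw [sq]; exact mul_le_mul_of_nonneg_right hxc (abs_nonneg x)
    calc (max x 0)^(n+1) ≤ |x|^2 := le_trans h2 h3
    _ ≤ c * ‖x‖ := h4
  · have hd : HasDerivAt (fun y : ℝ => y^(n+1)) (((n:ℝ)+1) * u^n) u := by
      simpa using hasDerivAt_pow (n+1) u
    have heq : tp n u = u ^ n := by simp [tp, max_eq_left h.le]
    rw [heq]
    refine hd.congr_of_eventuallyEq ?_
    filter_upwards [eventually_nhds_iff.mpr ⟨Set.Ioi 0, fun y hy => hy, isOpen_Ioi, h⟩] with y hy
    simp [tp, max_eq_left (le_of_lt (Set.mem_Ioi.mp hy))]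

lemma tp_integral (n : ℕ) (hn : 1 ≤ n) (x : ℝ) :
    ((n:ℝ)+1) * ∫ t in (0:ℝ)..1, tp n (x - t) = tp (n+1) x - tp (n+1) (x-1) := by
  have key : ∫ t in (0:ℝ)..1, (((n:ℝ)+1) * tp n (x - t)) =
      (fun t => -tp (n+1) (x - t)) 1 - (fun t => -tp (n+1) (x - t)) 0 := by
    refine intervalIntegral.integral_eq_sub_of_hasDerivAt (f := fun t => -tp (n+1) (x - t)) ?_ ?_
    · intro t _
      have h1 : HasDerivAt (fun t : ℝ => x - t) (-1) t := by
        simpa using (hasDerivAt_id t).const_sub x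
      have h2 := (tp_hasDerivAt n hn (x - t)).comp t h1
      have h3 : HasDerivAt (fun t : ℝ => -tp (n+1) (x - t))
          (-((((n:ℝ)+1) * tp n (x - t)) * (-1))) t := h2.neg
      simpa using h3
    · exact (continuous_const.mul ((tp_cont n).comp (continuous_const.sub continuous_id))).intervalIntegrable 0 1
  rw [intervalIntegral.integral_const_mul] at key
  simp only at key
  rw [key]; ring

lemma B_two (x : ℝ) : B 2 x = tp 1 x - 2 * tp 1 (x-1) + tp 1 (x-2) := by
  have h1 : (fun t => B 1 (x - t)) = Set.indicator (Set.Ioc (x-1) x) (fun _ => (1:ℝ)) := by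
    funext t
    by_cases h : t ∈ Set.Ioc (x-1) x
    · rw [Set.indicator_of_mem h]
      obtain ⟨h1, h2⟩ := h
      simp only [B]
      rw [if_pos ⟨by linarith, by linarith⟩]
    · rw [Set.indicator_of_notMem h]
      rw [Set.mem_Ioc, not_and_or] at h
      simp only [B]
      rw [if_neg]
      rintro ⟨ha, hb⟩
      rcases h with h | h <;> [skip; skip] <;> push_neg at h <;> linarith
  show (∫ t in (0:ℝ)..1, B 1 (x - t)) = _
  rw [show (fun t => B 1 (x-t)) = _ from h1] at *
  rw [intervalIntegral.integral_of_le zero_le_one]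
  rw [MeasureTheory.setIntegral_indicator measurableSet_Ioc]
  rw [MeasureTheory.setIntegral_const]
  rw [Set.Ioc_inter_Ioc]
  rw [Real.volume_real_Ioc, smul_eq_mul, mul_one]
  simp only [tp, pow_one]
  rcases le_total x 0 with h0 | h0 <;> rcases le_total x 1 with hA | hA <;>
    rcases le_total x 2 with h2 | h2 <;>
    simp [max_def, min_def] <;> split_ifs <;> linarith

set_option maxHeartbeats 1000000 in
lemma B_formula (d : ℕ) (hd : 1 ≤ d) (x : ℝ) :
    (d.factorial : ℝ) * B (d+1) x =
      ∑ i ∈ Finset.range (d+2), (-1:ℝ)^i * ((d+1).choose i : ℝ) * tp d (x - i) := by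
  induction d, hd using Nat.le_induction generalizing x with
  | base =>
    rw [B_two x]
    simp [Finset.sum_range_succ, Nat.factorial]
    ring
  | succ d hd ih =>
    have hB : B (d+2) x = ∫ t in (0:ℝ)..1, B (d+1) (x - t) := rfl
    have hint : ∀ i : ℕ, IntervalIntegrable (fun t => tp d (x - t - (i:ℝ))) volume 0 1 :=
      fun i => ((tp_cont d).comp ((continuous_const.sub continuous_id).sub continuous_const)).intervalIntegrable 0 1
    have step1 : (d.factorial : ℝ) * B (d+2) x =
        ∑ i ∈ Finset.range (d+2),
          (-1:ℝ)^i * ((d+1).choose i : ℝ) * ∫ t in (0:ℝ)..1, tp d (x - t - i) := by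
      rw [hB, ← intervalIntegral.integral_const_mul]
      have hc : ∫ t in (0:ℝ)..1, (d.factorial:ℝ) * B (d+1) (x-t)
          = ∫ t in (0:ℝ)..1, ∑ i ∈ Finset.range (d+2),
              (-1:ℝ)^i * ((d+1).choose i : ℝ) * tp d (x - t - i) :=
        intervalIntegral.integral_congr (fun t _ => ih (x-t))
      have hs := intervalIntegral.integral_finset_sum (μ := volume) (a := (0:ℝ)) (b := 1)
          (s := Finset.range (d+2))
          (f := fun (i : ℕ) (t : ℝ) => (-1:ℝ)^i * ((d+1).choose i : ℝ) * tp d (x - t - i))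
          (fun i _ => ((hint i).const_mul _))
      rw [hc, hs]
      exact Finset.sum_congr rfl fun i _ => intervalIntegral.integral_const_mul _ _
    have step2 : ((d+1).factorial : ℝ) * B (d+2) x =
        ∑ i ∈ Finset.range (d+2), (-1:ℝ)^i * ((d+1).choose i : ℝ) *
          (tp (d+1) (x - i) - tp (d+1) (x - i - 1)) := by
      have hf : ((d+1).factorial : ℝ) = ((d:ℝ)+1) * (d.factorial : ℝ) := by
        rw [Nat.factorial_succ]; push_cast; ring
      rw [hf, mul_assoc, step1, Finset.mul_sum]
      refine Finset.sum_congr rfl fun i _ => ?_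
      have hti := tp_integral d hd (x - i)
      have harg : (fun t => tp d (x - t - (i:ℝ))) = (fun t => tp d ((x - i) - t)) := by
        funext t; ring_nf
      rw [harg] at *
      calc ((d:ℝ)+1) * ((-1:ℝ)^i * ((d+1).choose i : ℝ) * ∫ t in (0:ℝ)..1, tp d ((x-(i:ℝ)) - t))
          = (-1:ℝ)^i * ((d+1).choose i : ℝ) * (((d:ℝ)+1) * ∫ t in (0:ℝ)..1, tp d ((x-(i:ℝ)) - t)) := by ring
        _ = _ := by rw [hti]
    rw [step2]
    have hshift : ∑ i ∈ Finset.range (d+2), (-1:ℝ)^i * ((d+1).choose i : ℝ) *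
          (tp (d+1) (x - i) - tp (d+1) (x - i - 1)) =
        ∑ i ∈ Finset.range (d+2), ((-1:ℝ)^i * ((d+1).choose i : ℝ) * tp (d+1) (x - i)
          - (-1:ℝ)^i * ((d+1).choose i : ℝ) * tp (d+1) (x - ((i+1:ℕ):ℝ))) := by
      refine Finset.sum_congr rfl fun i _ => ?_
      have : x - (i:ℝ) - 1 = x - ((i+1:ℕ):ℝ) := by push_cast; ring
      rw [this]; ring
    rw [hshift, Finset.sum_sub_distrib]
    rw [Finset.sum_range_succ' (fun i => (-1:ℝ)^i * (((d+1)+1).choose i : ℝ) * tp (d+1) (x - i)) (d+2)]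
    have expand : ∑ i ∈ Finset.range (d+2), (-1:ℝ)^(i+1) * (((d+1)+1).choose (i+1) : ℝ) * tp (d+1) (x - ((i+1:ℕ):ℝ)) =
        (∑ i ∈ Finset.range (d+2), -((-1:ℝ)^i * ((d+1).choose i : ℝ) * tp (d+1) (x - ((i+1:ℕ):ℝ))))
        + ∑ i ∈ Finset.range (d+2), (-1:ℝ)^(i+1) * ((d+1).choose (i+1) : ℝ) * tp (d+1) (x - ((i+1:ℕ):ℝ)) := by
      rw [← Finset.sum_add_distrib]
      refine Finset.sum_congr rfl fun i _ => ?_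
      rw [Nat.choose_succ_succ (d+1) i]
      push_cast; ring
    have tele : ∑ i ∈ Finset.range (d+2), (-1:ℝ)^(i+1) * ((d+1).choose (i+1) : ℝ) * tp (d+1) (x - ((i+1:ℕ):ℝ)) =
        ∑ i ∈ Finset.range (d+2), (-1:ℝ)^i * ((d+1).choose i : ℝ) * tp (d+1) (x - i)
          - (-1:ℝ)^0 * ((d+1).choose 0 : ℝ) * tp (d+1) (x - ((0:ℕ):ℝ)) := by
      have h3 := Finset.sum_range_succ'
        (fun i => (-1:ℝ)^i * ((d+1).choose i : ℝ) * tp (d+1) (x - i)) (d+2)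
      have h4 : ∑ i ∈ Finset.range (d+3), (-1:ℝ)^i * ((d+1).choose i : ℝ) * tp (d+1) (x - i) =
          ∑ i ∈ Finset.range (d+2), (-1:ℝ)^i * ((d+1).choose i : ℝ) * tp (d+1) (x - i) := by
        rw [Finset.sum_range_succ, Nat.choose_eq_zero_of_lt (by omega)]
        simp
      rw [show d+2+1 = d+3 from rfl, h4] at h3
      linarith [h3]
    rw [expand, tele, Finset.sum_neg_distrib]
    simp only [pow_zero, Nat.choose_zero_right, Nat.cast_one, one_mul, Nat.cast_zero, Nat.cast_ofNat]
    ring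

theorem eulerian_two_scale (d : ℕ) (hd : 1 ≤ d) (k : ℤ) :
    (Nat.factorial d : ℝ) * B (d + 1) (k : ℝ) =
      ∑ j ∈ Finset.range (d + 2),
        (2 : ℝ) ^ (-(d : ℤ)) * ((d + 1).choose j : ℝ) *
          ((Nat.factorial d : ℝ) * B (d + 1) ((2 * k - j : ℤ) : ℝ)) := by
  set g : ℕ → ℝ := fun s => tp d (2*(k:ℝ) - s) with hgdef
  set F : ℕ → ℕ → ℝ := fun i j =>
    (-1:ℝ)^i * ((d+1).choose i : ℝ) * ((d+1).choose j : ℝ) * g (i+j) with hFdef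
  have h2pos : (2:ℝ)^d ≠ 0 := by positivity
  have hcancel : (2:ℝ)^(-(d:ℤ)) * (2:ℝ)^d = 1 := by
    rw [zpow_neg, zpow_natCast]
    exact inv_mul_cancel₀ h2pos
  -- rewrite RHS
  have step1 : ∀ j ∈ Finset.range (d+2),
      (2 : ℝ) ^ (-(d : ℤ)) * ((d + 1).choose j : ℝ) *
          ((Nat.factorial d : ℝ) * B (d + 1) ((2 * k - j : ℤ) : ℝ)) =
      (2:ℝ)^(-(d:ℤ)) * ∑ i ∈ Finset.range (d+2), F i j := by
    intro j _
    rw [B_formula d hd, Finset.mul_sum, Finset.mul_sum]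
    refine Finset.sum_congr rfl fun i _ => ?_
    have harg : ((2*k - j : ℤ):ℝ) - (i:ℝ) = 2*(k:ℝ) - ((i+j:ℕ):ℝ) := by
      push_cast; ring
    rw [hFdef]
    simp only
    rw [harg]
    ring
  rw [Finset.sum_congr rfl step1, ← Finset.mul_sum]
  have hF0 : ∀ i j, ((d+1) < i ∨ (d+1) < j) → F i j = 0 := by
    intro i j hij
    rw [hFdef]
    simp only
    rcases hij with h | h
    · rw [Nat.choose_eq_zero_of_lt (show d+1 < i by omega)]; simp
    · rw [Nat.choose_eq_zero_of_lt (show d+1 < j by omega)]; simp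
  rw [sum_square (d+1) F hF0]
  -- inner diagonal sums
  have hinner : ∀ s ∈ Finset.range (2*(d+1)+1),
      ∑ i ∈ Finset.range (s+1), F i (s-i) =
      (if s % 2 = 0 ∧ s / 2 ≤ d+1 then (-1:ℝ)^(s/2) * ((d+1).choose (s/2) : ℝ) else 0) * g s := by
    intro s _
    rw [← es_eq', Finset.sum_mul]
    refine Finset.sum_congr rfl fun i hi => ?_
    rw [Finset.mem_range] at hi
    rw [hFdef]
    simp only
    rw [show i + (s - i) = s by omega]
  rw [Finset.sum_congr rfl hinner]
  -- restrict to even s via image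
  have himg : ∑ s ∈ Finset.range (2*(d+1)+1),
      (if s % 2 = 0 ∧ s / 2 ≤ d+1 then (-1:ℝ)^(s/2) * ((d+1).choose (s/2) : ℝ) else 0) * g s =
      ∑ s ∈ (Finset.range (d+2)).image (fun m => 2*m),
      (if s % 2 = 0 ∧ s / 2 ≤ d+1 then (-1:ℝ)^(s/2) * ((d+1).choose (s/2) : ℝ) else 0) * g s := by
    symm
    apply Finset.sum_subset
    · intro s hs
      rw [Finset.mem_image] at hs
      obtain ⟨m, hm, rfl⟩ := hs
      rw [Finset.mem_range] at hm ⊢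
      omega
    · intro s hs hns
      rw [Finset.mem_range] at hs
      rw [if_neg, zero_mul]
      intro ⟨he, hle⟩
      exact hns (Finset.mem_image.mpr ⟨s/2, Finset.mem_range.mpr (by omega), by omega⟩)
  rw [himg, Finset.sum_image (fun a _ b _ h => by omega)]
  -- evaluate at even points and cancel powers of 2
  rw [B_formula d hd, Finset.mul_sum]
  refine (Finset.sum_congr rfl fun m hm => ?_).symm
  rw [Finset.mem_range] at hm
  rw [if_pos ⟨by omega, by omega⟩]
  rw [show (2*m)/2 = m by omega]
  have hg2 : g (2*m) = 2^d * tp d ((k:ℝ) - m) := by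
    rw [hgdef]
    simp only
    rw [tp, tp]
    have : 2*(k:ℝ) - ((2*m:ℕ):ℝ) = 2*((k:ℝ) - m) := by push_cast; ring
    rw [this]
    rw [show max (2*((k:ℝ)-m)) 0 = 2 * max ((k:ℝ)-m) 0 by
      rcases le_total ((k:ℝ)-m) 0 with h | h
      · rw [max_eq_right h, max_eq_right (by linarith), mul_zero]
      · rw [max_eq_left h, max_eq_left (by linarith)]]
    rw [mul_pow]
  rw [hg2]
  calc (2:ℝ)^(-(d:ℤ)) * ((-1:ℝ)^m * ((d+1).choose m : ℝ) * ((2:ℝ)^d * tp d ((k:ℝ) - m)))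
      = ((2:ℝ)^(-(d:ℤ)) * (2:ℝ)^d) * ((-1:ℝ)^m * ((d+1).choose m : ℝ) * tp d ((k:ℝ) - m)) := by
        ring
    _ = (-1:ℝ)^m * ((d+1).choose m : ℝ) * tp d ((k:ℝ) - m) := by rw [hcancel, one_mul]
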